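/- Let G and H be Polish groups and let φ : G → H be a continuous surjective group homomorphism. If H can be partitioned into a Haar null set and a meagre set, then G can also be partitioned into a Haar null set and a meagre set. -/

import Mathlib

open MeasureTheory Set

section AuxDepRec

/-- Dependent recursive choice along `ℕ`. -/
theorem my_depRec {α : Type*} (P : ℕ → α → Prop) (R : ℕ → α → α → Prop)
    (h0 : ∃ a, P 0 a) (hstep : ∀ n a, P n a → ∃ b, P (n + 1) b ∧ R n a b) :
    ∃ u : ℕ → α, (∀ n, P n (u n)) ∧ ∀ n, R n (u n) (u (n + 1)) := by
  let f : ∀ n : ℕ, {a : α // P n a} := fun n =>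
    Nat.rec ⟨h0.choose, h0.choose_spec⟩
      (fun n p => ⟨(hstep n p.1 p.2).choose, (hstep n p.1 p.2).choose_spec.1⟩) n
  refine ⟨fun n => (f n).1, fun n => (f n).2, fun n => ?_⟩
  exact (hstep n (f n).1 (f n).2).choose_spec.2

end AuxDepRec

section MeagreAux

open Filter Topology

variable {X : Type*} [TopologicalSpace X]

theorem my_not_isMeagre_open [BaireSpace X] {U : Set X} (hU : IsOpen U) (hne : U.Nonempty) :
    ¬ IsMeagre U := by
  intro h
  have hd : Dense Uᶜ := dense_of_mem_residual h
  obtain ⟨x, hx, hx'⟩ := hd.inter_open_nonempty U hU hne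
  exact hx' hx

theorem my_isMeagre_iUnion {ι : Sort*} [Countable ι] {s : ι → Set X}
    (h : ∀ i, IsMeagre (s i)) : IsMeagre (⋃ i, s i) := by
  rw [IsMeagre, compl_iUnion]
  exact countable_iInter_mem.mpr h

theorem my_isMeagre_union {s t : Set X} (hs : IsMeagre s) (ht : IsMeagre t) :
    IsMeagre (s ∪ t) := by
  rw [IsMeagre, compl_union]
  exact Filter.inter_mem hs ht

theorem my_isMeagre_image {Y : Type*} [TopologicalSpace Y] (e : X ≃ₜ Y) {s : Set X}
    (h : IsMeagre s) : IsMeagre (e '' s) := by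
  rw [IsMeagre, ← image_compl_eq e.bijective, ← e.residual_map_eq, Filter.mem_map,
    Set.preimage_image_eq _ e.injective]
  exact h

theorem my_eventuallyEq_diff_meagre {S T : Set X} (h : S =ᵇ T) :
    IsMeagre (S \ T) ∧ IsMeagre (T \ S) := by
  constructor
  · rw [IsMeagre]
    refine Filter.mem_of_superset h fun x hx hmem => ?_
    obtain ⟨h1, h2⟩ := hmem
    rw [show (x ∈ S) = (x ∈ T) from hx] at h1
    exact h2 h1
  · rw [IsMeagre]
    refine Filter.mem_of_superset h fun x hx hmem => ?_
    obtain ⟨h1, h2⟩ := hmem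
    rw [← show (x ∈ S) = (x ∈ T) from hx] at h1
    exact h2 h1

theorem my_isMeagre_closure_diff {U : Set X} (hUo : IsOpen U) :
    IsMeagre (closure U \ U) := by
  have hclosed : IsClosed (closure U \ U) := by
    rw [diff_eq]
    exact isClosed_closure.inter (isClosed_compl_iff.mpr hUo)
  rw [IsMeagre]
  apply residual_of_dense_open hclosed.isOpen_compl
  rw [← interior_eq_empty_iff_dense_compl]
  rw [eq_empty_iff_forall_notMem]
  intro x hx
  obtain ⟨hx1, hx2⟩ := interior_subset hx
  obtain ⟨y, hy1, hy2⟩ := mem_closure_iff.mp hx1 _ isOpen_interior hx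
  exact (interior_subset hy1).2 hy2

end MeagreAux

section Hull

open Filter Topology TopologicalSpace

variable {X : Type*} [TopologicalSpace X] [SecondCountableTopology X]
set_option linter.unusedSectionVars false

/-- Points near which `S` is non-meagre. -/
def myD (S : Set X) : Set X := {x | ∀ U : Set X, IsOpen U → x ∈ U → ¬ IsMeagre (S ∩ U)}

theorem myD_isClosed (S : Set X) : IsClosed (myD S) := by
  rw [← isOpen_compl_iff, isOpen_iff_forall_mem_open]
  rintro x hx
  simp only [myD, mem_compl_iff, mem_setOf_eq, not_forall] at hx
  obtain ⟨U, hUo, hxU, hm⟩ := hx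
  simp only [not_not] at hm
  refine ⟨U, fun y hy hyD => ?_, hUo, hxU⟩
  exact hyD U hUo hy hm

theorem myD_subset_closure (S : Set X) : myD S ⊆ closure S := by
  intro x hx
  rw [mem_closure_iff]
  intro U hUo hxU
  by_contra hne
  rw [not_nonempty_iff_eq_empty] at hne
  refine hx U hUo hxU ?_
  rw [inter_comm] at hne
  rw [hne]
  exact IsMeagre.empty

theorem isMeagre_diff_myD (S : Set X) : IsMeagre (S \ myD S) := by
  classical
  have hb := isBasis_countableBasis X
  have hsub : S \ myD S ⊆ ⋃ b ∈ {b ∈ countableBasis X | IsMeagre (S ∩ b)}, (S ∩ b) := by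
    intro x hx
    obtain ⟨hxS, hxD⟩ := hx
    simp only [myD, mem_setOf_eq, not_forall] at hxD
    obtain ⟨U, hUo, hxU, hm⟩ := hxD
    simp only [not_not] at hm
    obtain ⟨b, hbB, hxb, hbU⟩ := hb.exists_subset_of_mem_open hxU hUo
    exact mem_biUnion ⟨hbB, hm.mono (inter_subset_inter_right _ hbU)⟩ ⟨hxS, hxb⟩
  refine IsMeagre.mono hsub ?_
  have hcnt : {b ∈ countableBasis X | IsMeagre (S ∩ b)}.Countable :=
    (countable_countableBasis X).mono (sep_subset _ _)
  have := hcnt.to_subtype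
  rw [biUnion_eq_iUnion]
  exact my_isMeagre_iUnion fun i => i.2.2

/-- The Baire-measurable hull of a set. -/
def myHull (S : Set X) : Set X := myD S ∪ S

theorem subset_myHull (S : Set X) : S ⊆ myHull S := subset_union_right

theorem myHull_subset_closure (S : Set X) : myHull S ⊆ closure S :=
  union_subset (myD_subset_closure S) subset_closure

theorem baireMeasurableSet_myHull (S : Set X) : BaireMeasurableSet (myHull S) := by
  have h1 : BaireMeasurableSet (myD S) :=
    BaireMeasurableSet.of_compl ((myD_isClosed S).isOpen_compl.baireMeasurableSet)
  have h2 : BaireMeasurableSet (S \ myD S) := (isMeagre_diff_myD S).baireMeasurableSet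
  have he : myHull S = myD S ∪ (S \ myD S) := by
    rw [myHull, union_diff_self]
  rw [he]
  exact h1.union h2

theorem myHull_diff_isMeagre {S C : Set X} (hC : BaireMeasurableSet C)
    (hSC : S ⊆ C) : IsMeagre (myHull S \ C) := by
  obtain ⟨U, hUo, hCU⟩ := hC.residualEq_isOpen
  obtain ⟨hCU1, hCU2⟩ := my_eventuallyEq_diff_meagre hCU
  have hDU : myD S ⊆ closure U := by
    intro x hx
    rw [mem_closure_iff]
    intro O hOo hxO
    by_contra hOU
    rw [not_nonempty_iff_eq_empty] at hOU
    have hSOCU : S ∩ O ⊆ C \ U := fun y hy =>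
      ⟨hSC hy.1, fun hyU => eq_empty_iff_forall_notMem.mp hOU y ⟨hy.2, hyU⟩⟩
    exact hx O hOo hxO (hCU1.mono hSOCU)
  have hsub : myHull S \ C ⊆ (closure U \ U) ∪ (U \ C) := by
    rintro x ⟨hx, hxC⟩
    rcases hx with hxD | hxS
    · by_cases hxU : x ∈ U
      · exact Or.inr ⟨hxU, hxC⟩
      · exact Or.inl ⟨hDU hxD, hxU⟩
    · exact absurd (hSC hxS) hxC
  exact (my_isMeagre_union (my_isMeagre_closure_diff hUo) hCU2).mono hsub

end Hull

section AnalyticBP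

open Filter Topology TopologicalSpace

/-- Analytic sets in a Polish space have the Baire property. -/
theorem my_analyticSet_baireMeasurableSet {X : Type*} [TopologicalSpace X] [PolishSpace X]
    {A : Set X} (hA : MeasureTheory.AnalyticSet A) : BaireMeasurableSet A := by
  rw [MeasureTheory.AnalyticSet] at hA
  rcases hA with rfl | ⟨f, hf, rfl⟩
  · exact IsMeagre.empty.baireMeasurableSet
  letI := upgradeIsCompletelyMetrizable X
  classical
  -- cylinders indexed by finite lists
  set ext : List ℕ → (ℕ → ℕ) := fun l i => l.getD i 0 with hext
  set Cl : List ℕ → Set (ℕ → ℕ) := fun l => PiNat.cylinder (ext l) l.length with hCl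
  set As : List ℕ → Set X := fun l => f '' Cl l with hAs
  set Bad : Set X := ⋃ l : List ℕ, (myHull (As l) \ ⋃ n : ℕ, myHull (As (l ++ [n]))) with hBadDef
  -- each list-cylinder splits into its one-step extensions
  have hsplit : ∀ l : List ℕ, As l ⊆ ⋃ n : ℕ, myHull (As (l ++ [n])) := by
    rintro l x ⟨y, hy, rfl⟩
    refine mem_iUnion.mpr ⟨y l.length, subset_myHull _ ⟨y, ?_, rfl⟩⟩
    rw [PiNat.mem_cylinder_iff]
    intro i hi
    rw [List.length_append, List.length_singleton] at hi
    rcases Nat.lt_succ_iff_lt_or_eq.mp hi with hi' | hi'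
    · have h1 : ext (l ++ [y l.length]) i = ext l i := by
        simp only [hext]
        rw [List.getD_append _ _ _ _ hi']
      rw [h1]
      exact (PiNat.mem_cylinder_iff.mp hy) i hi'
    · subst hi'
      simp only [hext]
      rw [List.getD_append_right _ _ _ _ le_rfl]
      simp
  have hBad : IsMeagre Bad := by
    refine my_isMeagre_iUnion fun l => ?_
    refine myHull_diff_isMeagre ?_ (hsplit l)
    exact BaireMeasurableSet.iUnion fun n => baireMeasurableSet_myHull _
  -- the complement of Bad inside the hull is contained in the range
  have hA0 : As [] = range f := by
    simp only [hAs, hCl]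
    rw [show ([] : List ℕ).length = 0 from rfl, PiNat.cylinder_zero, image_univ]
  have hmain : myHull (As []) \ Bad ⊆ range f := by
    intro x hx
    obtain ⟨hx0, hxBad⟩ := hx
    -- recursively choose a branch
    obtain ⟨u, hu, hustep⟩ := my_depRec
      (P := fun n l => l.length = n ∧ x ∈ myHull (As l))
      (R := fun _ l l' => ∃ m, l' = l ++ [m])
      ⟨[], rfl, hx0⟩
      (by
        rintro n l ⟨hlen, hxl⟩
        have hnotbad : x ∉ myHull (As l) \ ⋃ m : ℕ, myHull (As (l ++ [m])) := by
          intro hxb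
          exact hxBad (mem_iUnion.mpr ⟨l, hxb⟩)
        have : x ∈ ⋃ m : ℕ, myHull (As (l ++ [m])) := by
          by_contra hcon
          exact hnotbad ⟨hxl, hcon⟩
        obtain ⟨m, hm⟩ := mem_iUnion.mp this
        exact ⟨l ++ [m], ⟨by simp [hlen], hm⟩, m, rfl⟩)
    -- coherence of the branch
    have hlen : ∀ n, (u n).length = n := fun n => (hu n).1
    have hcoh : ∀ i n, i < n → (u n).getD i 0 = (u (i + 1)).getD i 0 := by
      intro i n hin
      induction n with
      | zero => omega
      | succ n ih =>
        rcases Nat.lt_succ_iff_lt_or_eq.mp hin with h | h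
        · obtain ⟨m, hm⟩ := hustep n
          rw [hm, List.getD_append _ _ _ _ (by rw [hlen]; omega)]
          exact ih h
        · rw [h]
    set g : ℕ → ℕ := fun i => (u (i + 1)).getD i 0 with hg
    have hgcyl : ∀ n, g ∈ PiNat.cylinder (ext (u n)) n := by
      intro n
      rw [PiNat.mem_cylinder_iff]
      intro i hi
      simp only [hg, hext]
      exact (hcoh i n hi).symm
    have hxcl : ∀ n, x ∈ closure (f '' PiNat.cylinder g n) := by
      intro n
      have h1 : x ∈ closure (As (u n)) := myHull_subset_closure _ (hu n).2
      have h2 : PiNat.cylinder (ext (u n)) ((u n).length) = PiNat.cylinder g n := by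
        rw [hlen]
        exact PiNat.mem_cylinder_iff_eq.mp ((PiNat.mem_cylinder_comm _ _ _).mp (hgcyl n))
      simpa only [hAs, hCl, h2] using h1
    -- conclude `x = f g`
    have hdist : ∀ ε : ℝ, 0 < ε → dist x (f g) ≤ ε := by
      intro ε hε
      have hco : ContinuousAt f g := hf.continuousAt
      have hpre : IsOpen (f ⁻¹' Metric.ball (f g) ε) := Metric.isOpen_ball.preimage hf
      have hgpre : g ∈ f ⁻¹' Metric.ball (f g) ε := by
        simp [Metric.mem_ball, hε]
      obtain ⟨s, ⟨z, n, rfl⟩, hgs, hsW⟩ :=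
        (PiNat.isTopologicalBasis_cylinders (fun _ : ℕ => ℕ)).exists_subset_of_mem_open hgpre hpre
      have hcyl_eq : PiNat.cylinder g n = PiNat.cylinder z n := PiNat.mem_cylinder_iff_eq.mp hgs
      have himg : f '' PiNat.cylinder g n ⊆ Metric.ball (f g) ε := by
        rw [hcyl_eq]
        rintro y ⟨w, hw, rfl⟩
        exact hsW hw
      have : x ∈ closure (Metric.ball (f g) ε) := closure_mono himg (hxcl n)
      have := Metric.closure_ball_subset_closedBall this
      simpa [Metric.mem_closedBall, dist_comm] using this
    refine ⟨g, ?_⟩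
    have : dist x (f g) ≤ 0 := le_of_forall_pos_le_add (by
      intro ε hε
      simpa using hdist ε hε)
    have h0 : dist x (f g) = 0 := le_antisymm this dist_nonneg
    exact (eq_of_dist_eq_zero h0).symm
  -- wrap up: range f differs from the hull by a meagre set
  refine (baireMeasurableSet_myHull (As [])).congr ?_
  have hsub1 : range f ⊆ myHull (As []) := by
    rw [← hA0]
    exact subset_myHull _
  rw [Filter.eventuallyEq_set]
  refine Filter.mem_of_superset hBad fun x hx => ?_
  simp only [mem_compl_iff] at hx
  constructor
  · intro hxh
    exact hmain ⟨hxh, hx⟩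
  · intro hxr
    exact hsub1 hxr

end AnalyticBP

section Pettis

open Filter Topology Pointwise

theorem my_pettis {H : Type*} [Group H] [TopologicalSpace H] [IsTopologicalGroup H] [BaireSpace H]
    {A : Set H} (hA : BaireMeasurableSet A) (hnm : ¬ IsMeagre A) : A * A⁻¹ ∈ 𝓝 (1 : H) := by
  obtain ⟨U, hUo, hAU⟩ := hA.residualEq_isOpen
  obtain ⟨hAU1, hAU2⟩ := my_eventuallyEq_diff_meagre hAU
  have hUne : U.Nonempty := by
    rcases eq_empty_or_nonempty U with h | h
    · exfalso
      apply hnm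
      refine hAU1.mono (fun x hx => ⟨hx, by simp [h]⟩ : A ⊆ A \ U)
    · exact h
  have key : U * U⁻¹ ⊆ A * A⁻¹ := by
    intro x hx
    obtain ⟨p, hp, q, hq, hpq⟩ := hx
    rw [Set.mem_inv] at hq
    set e : H ≃ₜ H := Homeomorph.mulLeft x with he
    have hxq : x * q⁻¹ = p := by rw [← hpq]; exact mul_inv_cancel_right p q
    have hne2 : (U ∩ e '' U).Nonempty := ⟨p, hp, ⟨q⁻¹, hq, hxq⟩⟩
    have hopen2 : IsOpen (U ∩ e '' U) := hUo.inter (e.isOpenMap _ hUo)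
    have hmA : IsMeagre (e '' (U \ A)) := my_isMeagre_image e hAU2
    have hbig : ¬ IsMeagre (U ∩ e '' U) := my_not_isMeagre_open hopen2 hne2
    have hnonempty : ((U ∩ e '' U) \ ((U \ A) ∪ e '' (U \ A))).Nonempty := by
      by_contra hcon
      rw [not_nonempty_iff_eq_empty, diff_eq_empty] at hcon
      exact hbig ((my_isMeagre_union hAU2 hmA).mono hcon)
    obtain ⟨a, ⟨haU, haU'⟩, hanot⟩ := hnonempty
    rw [mem_union, not_or] at hanot
    obtain ⟨ha1, ha2⟩ := hanot
    have haA : a ∈ A := by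
      by_contra hcon
      exact ha1 ⟨haU, hcon⟩
    obtain ⟨w, hw, hw'⟩ := haU'
    have hwA : w ∈ A := by
      by_contra hcon
      exact ha2 ⟨w, ⟨hw, hcon⟩, hw'⟩
    have hw2 : x * w = a := hw'
    refine ⟨a, haA, w⁻¹, Set.inv_mem_inv.mpr hwA, ?_⟩
    rw [← hw2]
    exact mul_inv_cancel_right x w
  have hopen : IsOpen (U * U⁻¹) := hUo.mul_right
  have hmem : (1 : H) ∈ U * U⁻¹ := by
    obtain ⟨u, hu⟩ := hUne
    exact ⟨u, hu, u⁻¹, Set.inv_mem_inv.mpr hu, by simp⟩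
  exact Filter.mem_of_superset (hopen.mem_nhds hmem) key

end Pettis

section OpenMapping

open Filter Topology TopologicalSpace Pointwise

theorem my_isOpenMap {G H : Type*}
    [Group G] [TopologicalSpace G] [IsTopologicalGroup G] [PolishSpace G]
    [MeasurableSpace G] [BorelSpace G]
    [Group H] [TopologicalSpace H] [IsTopologicalGroup H] [PolishSpace H]
    [MeasurableSpace H] [BorelSpace H]
    (φ : G →* H) (hc : Continuous φ) (hs : Function.Surjective φ) : IsOpenMap φ := by
  letI := upgradeIsCompletelyMetrizable H
  -- key step: the image of a 1-neighbourhood is a 1-neighbourhood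
  have key : ∀ U ∈ 𝓝 (1 : G), φ '' U ∈ 𝓝 (1 : H) := by
    intro U hU
    obtain ⟨V, hV𝓝, hVcl, hVinv, hVU⟩ := exists_closed_nhds_one_inv_eq_mul_subset hU
    set A : Set H := φ '' V with hA
    have hABP : BaireMeasurableSet A :=
      my_analyticSet_baireMeasurableSet ((hVcl.measurableSet.analyticSet).image_of_continuous hc)
    -- A is non-meagre since countably many translates cover H
    obtain ⟨D, hDc, hDd⟩ := TopologicalSpace.exists_countable_dense G
    have hcover : (univ : Set H) ⊆ ⋃ d ∈ D, (Homeomorph.mulLeft (φ d)) '' A := by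
      intro h _
      obtain ⟨g, rfl⟩ := hs h
      have h1V : (1 : G) ∈ interior V := mem_interior_iff_mem_nhds.mpr hV𝓝
      have hop : IsOpen ((Homeomorph.mulLeft g) '' (interior V)⁻¹) :=
        (Homeomorph.mulLeft g).isOpenMap _ (isOpen_interior.inv)
      have hne : ((Homeomorph.mulLeft g) '' (interior V)⁻¹).Nonempty :=
        ⟨g, 1, by simpa using h1V, by simp⟩
      obtain ⟨d, hdO, hdD⟩ := hDd.inter_open_nonempty _ hop hne
      obtain ⟨w, hw, hdw⟩ := hdO
      rw [Set.mem_inv] at hw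
      have hgw : g * w = d := hdw
      refine mem_biUnion hdD ⟨φ w⁻¹, ⟨w⁻¹, interior_subset hw, rfl⟩, ?_⟩
      show φ d * φ w⁻¹ = φ g
      rw [← map_mul, ← hgw]
      congr 1
      group
    have hnm : ¬ IsMeagre A := by
      intro hmA
      have hmuniv : IsMeagre (univ : Set H) := by
        refine IsMeagre.mono hcover ?_
        have := hDc.to_subtype
        rw [biUnion_eq_iUnion]
        exact my_isMeagre_iUnion fun d => my_isMeagre_image _ hmA
      exact my_not_isMeagre_open isOpen_univ ⟨1, trivial⟩ hmuniv
    have hAA : A * A⁻¹ ∈ 𝓝 (1 : H) := my_pettis hABP hnm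
    refine Filter.mem_of_superset hAA ?_
    have hAinv : A⁻¹ = φ '' V⁻¹ := by
      ext z
      simp only [Set.mem_inv, hA, Set.mem_image]
      constructor
      · rintro ⟨v, hv, hveq⟩
        refine ⟨v⁻¹, Set.inv_mem_inv.mpr hv, ?_⟩
        rw [map_inv, hveq]
        simp
      · rintro ⟨v, hv, rfl⟩
        exact ⟨v⁻¹, hv, by rw [map_inv]⟩
    rw [hAinv, hA, ← Set.image_mul, hVinv]
    exact Set.image_mono hVU
  -- deduce openness
  intro U hUo
  rw [isOpen_iff_mem_nhds]
  rintro z ⟨x, hx, rfl⟩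
  set U' : Set G := (Homeomorph.mulLeft x⁻¹) '' U with hU'
  have h1 : U' ∈ 𝓝 (1 : G) := by
    refine ((Homeomorph.mulLeft x⁻¹).isOpenMap _ hUo).mem_nhds ?_
    exact ⟨x, hx, by simp⟩
  have h2 : φ '' U' ∈ 𝓝 (1 : H) := key _ h1
  set e : H ≃ₜ H := Homeomorph.mulLeft (φ x) with he
  have h3 : e '' (φ '' U') ∈ 𝓝 (e 1) := by
    rw [← e.map_nhds_eq, Filter.mem_map, Set.preimage_image_eq _ e.injective]
    exact h2
  have h4 : e '' (φ '' U') = φ '' U := by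
    rw [hU', Set.image_image, Set.image_image]
    refine Set.image_congr fun a _ => ?_
    show φ x * φ (x⁻¹ * a) = φ a
    rw [map_mul, map_inv, ← mul_assoc]
    simp
  rw [h4] at h3
  rw [show e (1 : H) = φ x by show φ x * 1 = φ x; simp] at h3
  exact h3

end OpenMapping

section SectionConstruction

open Filter Topology TopologicalSpace Metric

theorem my_exists_section {G H : Type*}
    [Group G] [TopologicalSpace G] [IsTopologicalGroup G] [PolishSpace G]
    [MeasurableSpace G] [BorelSpace G]
    [Group H] [TopologicalSpace H] [IsTopologicalGroup H] [PolishSpace H]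
    [MeasurableSpace H] [BorelSpace H]
    (φ : G →* H) (hc : Continuous φ) (hs : Function.Surjective φ) (ho : IsOpenMap φ) :
    ∃ s : H → G, Measurable s ∧ ∀ h : H, φ (s h) = h := by
  letI := upgradeIsCompletelyMetrizable G
  classical
  have hGne : Nonempty G := ⟨1⟩
  set y : ℕ → G := TopologicalSpace.denseSeq G with hy
  have hyd : DenseRange y := TopologicalSpace.denseRange_denseSeq G
  set P : ℕ → (H → G) → Prop := fun n s =>
    Measurable s ∧ ∀ h : H, h ∈ φ '' Metric.ball (s h) ((1 / 2 : ℝ) ^ n) with hP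
  -- base
  have hbase : ∃ s, P 0 s := by
    have hcov : ∀ h : H, ∃ j, h ∈ φ '' Metric.ball (y j) ((1 / 2 : ℝ) ^ 0) := by
      intro h
      obtain ⟨g, rfl⟩ := hs h
      obtain ⟨j, hj⟩ := hyd.exists_dist_lt g (by norm_num : (0 : ℝ) < 1)
      exact ⟨j, g, by simpa [Metric.mem_ball, dist_comm] using hj, rfl⟩
    refine ⟨fun h => y (Nat.find (hcov h)), ⟨?_, ?_⟩⟩
    · refine Measurable.find (f := fun j (_ : H) => y j) (fun j => measurable_const) ?_ hcov
      intro j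
      exact (ho _ Metric.isOpen_ball).measurableSet
    · intro h
      exact Nat.find_spec (hcov h)
  -- step
  have hstep : ∀ n s, P n s → ∃ s', P (n + 1) s' ∧
      ∀ h : H, dist (s' h) (s h) ≤ 2 * (1 / 2 : ℝ) ^ n := by
    intro n s hsP
    obtain ⟨hmeas, hball⟩ := hsP
    have hcov : ∀ h : H, ∃ j, h ∈ φ ''
        (Metric.ball (y j) ((1 / 2 : ℝ) ^ (n + 1)) ∩ Metric.ball (s h) ((1 / 2 : ℝ) ^ n)) := by
      intro h
      obtain ⟨g, hg, hgh⟩ := hball h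
      obtain ⟨j, hj⟩ := hyd.exists_dist_lt g (by positivity : (0 : ℝ) < (1 / 2 : ℝ) ^ (n + 1))
      exact ⟨j, g, ⟨by simpa [Metric.mem_ball, dist_comm] using hj, hg⟩, hgh⟩
    have hmeasp : ∀ j, MeasurableSet {h : H | h ∈ φ ''
        (Metric.ball (y j) ((1 / 2 : ℝ) ^ (n + 1)) ∩ Metric.ball (s h) ((1 / 2 : ℝ) ^ n))} := by
      intro j
      have hTopen : IsOpen {p : H × G | p.1 ∈ φ ''
          (Metric.ball (y j) ((1 / 2 : ℝ) ^ (n + 1)) ∩ Metric.ball p.2 ((1 / 2 : ℝ) ^ n))} := by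
        have heq : {p : H × G | p.1 ∈ φ ''
            (Metric.ball (y j) ((1 / 2 : ℝ) ^ (n + 1)) ∩ Metric.ball p.2 ((1 / 2 : ℝ) ^ n))} =
            (Prod.map (φ : G → H) (id : G → G)) ''
            {q : G × G | q.1 ∈ Metric.ball (y j) ((1 / 2 : ℝ) ^ (n + 1)) ∧
              dist q.1 q.2 < (1 / 2 : ℝ) ^ n} := by
          ext ⟨h, x⟩
          simp only [Set.mem_image, Set.mem_setOf_eq, Prod.map, Prod.exists, Prod.mk.injEq,
            Set.mem_inter_iff, Metric.mem_ball, id]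
          constructor
          · rintro ⟨g, ⟨hg1, hg2⟩, rfl⟩
            exact ⟨g, x, ⟨hg1, hg2⟩, rfl, rfl⟩
          · rintro ⟨g, x', ⟨hg1, hg2⟩, h1, rfl⟩
            exact ⟨g, ⟨hg1, hg2⟩, h1⟩
        rw [heq]
        refine (ho.prodMap IsOpenMap.id) _ ?_
        have : IsOpen {q : G × G | dist q.1 q.2 < (1 / 2 : ℝ) ^ n} :=
          isOpen_lt (continuous_dist) continuous_const
        exact ((Metric.isOpen_ball.preimage continuous_fst).inter this)
      have : {h : H | h ∈ φ ''
          (Metric.ball (y j) ((1 / 2 : ℝ) ^ (n + 1)) ∩ Metric.ball (s h) ((1 / 2 : ℝ) ^ n))} =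
          (fun h : H => (h, s h)) ⁻¹' {p : H × G | p.1 ∈ φ ''
          (Metric.ball (y j) ((1 / 2 : ℝ) ^ (n + 1)) ∩ Metric.ball p.2 ((1 / 2 : ℝ) ^ n))} := rfl
      rw [this]
      exact (measurable_id.prodMk hmeas) hTopen.measurableSet
    refine ⟨fun h => y (Nat.find (hcov h)), ⟨?_, ?_⟩, ?_⟩
    · exact Measurable.find (f := fun j (_ : H) => y j) (fun j => measurable_const) hmeasp hcov
    · intro h
      have := Nat.find_spec (hcov h)
      exact Set.image_mono Set.inter_subset_left this
    · intro h
      obtain ⟨g, ⟨hg1, hg2⟩, _⟩ := Nat.find_spec (hcov h)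
      rw [Metric.mem_ball] at hg1 hg2
      calc dist (y (Nat.find (hcov h))) (s h)
          ≤ dist (y (Nat.find (hcov h))) g + dist g (s h) := dist_triangle _ _ _
        _ ≤ (1 / 2 : ℝ) ^ (n + 1) + (1 / 2 : ℝ) ^ n := by
            rw [dist_comm] at hg1
            exact add_le_add hg1.le hg2.le
        _ ≤ 2 * (1 / 2 : ℝ) ^ n := by
            rw [pow_succ]
            nlinarith [pow_pos (by norm_num : (0:ℝ) < 1/2) n]
  obtain ⟨u, hu, hur⟩ := my_depRec P _ hbase hstep
  -- limits
  have hcauchy : ∀ h : H, CauchySeq fun n => u n h := by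
    intro h
    refine cauchySeq_of_le_geometric (1 / 2 : ℝ) 2 (by norm_num) fun n => ?_
    rw [dist_comm]
    exact hur n h
  have hlim : ∀ h : H, ∃ x : G, Tendsto (fun n => u n h) atTop (𝓝 x) :=
    fun h => cauchySeq_tendsto_of_complete (hcauchy h)
  set sfin : H → G := fun h => (hlim h).choose with hsfin
  have hten : ∀ h : H, Tendsto (fun n => u n h) atTop (𝓝 (sfin h)) := fun h => (hlim h).choose_spec
  refine ⟨sfin, ?_, ?_⟩
  · refine measurable_of_tendsto_metrizable' atTop (fun n => (hu n).1) ?_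
    rw [tendsto_pi_nhds]
    exact hten
  · intro h
    -- witnesses in the fibres converging to `sfin h`
    have hz : ∀ n : ℕ, ∃ g : G, g ∈ Metric.ball (u n h) ((1 / 2 : ℝ) ^ n) ∧ φ g = h := by
      intro n
      obtain ⟨g, hg, hgh⟩ := (hu n).2 h
      exact ⟨g, hg, hgh⟩
    set z : ℕ → G := fun n => (hz n).choose with hzdef
    have hz1 : ∀ n, dist (z n) (u n h) < (1 / 2 : ℝ) ^ n := fun n => (hz n).choose_spec.1
    have hz2 : ∀ n, φ (z n) = h := fun n => (hz n).choose_spec.2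
    have hzten : Tendsto z atTop (𝓝 (sfin h)) := by
      rw [tendsto_iff_dist_tendsto_zero]
      have hb : ∀ n, dist (z n) (sfin h) ≤ (1 / 2 : ℝ) ^ n + dist (u n h) (sfin h) := by
        intro n
        calc dist (z n) (sfin h) ≤ dist (z n) (u n h) + dist (u n h) (sfin h) :=
              dist_triangle _ _ _
          _ ≤ (1 / 2 : ℝ) ^ n + dist (u n h) (sfin h) := by
              exact add_le_add (hz1 n).le le_rfl
      have h1 : Tendsto (fun n => (1 / 2 : ℝ) ^ n + dist (u n h) (sfin h)) atTop (𝓝 0) := by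
        have ha : Tendsto (fun n => (1 / 2 : ℝ) ^ n) atTop (𝓝 0) :=
          tendsto_pow_atTop_nhds_zero_of_lt_one (by norm_num) (by norm_num)
        have hb' : Tendsto (fun n => dist (u n h) (sfin h)) atTop (𝓝 0) :=
          tendsto_iff_dist_tendsto_zero.mp (hten h)
        simpa using ha.add hb'
      exact squeeze_zero (fun n => dist_nonneg) hb h1
    have : Tendsto (fun n => φ (z n)) atTop (𝓝 (φ (sfin h))) :=
      (hc.tendsto _).comp hzten
    have hconst : Tendsto (fun _ : ℕ => h) atTop (𝓝 h) := tendsto_const_nhds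
    refine tendsto_nhds_unique ?_ hconst
    simpa [hz2] using this

end SectionConstruction

/-- A subset of a group with a measurable structure is *Haar null* (Christensen) if it is
contained in a Borel (here: measurable) set `B` admitting a Borel probability measure `μ`
all of whose two-sided translates `g • B • h` are `μ`-null. -/
def IsHaarNull {G : Type*} [Group G] [MeasurableSpace G] (A : Set G) : Prop :=
  ∃ B : Set G, A ⊆ B ∧ MeasurableSet B ∧
    ∃ μ : Measure G, IsProbabilityMeasure μ ∧ ∀ g h : G, μ ((fun b => g * b * h) '' B) = 0

/-- If `φ : G → H` is a continuous surjective homomorphism of Polish groups and `H` can be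
partitioned into a Haar null set and a meagre set, then so can `G`. -/
theorem stmt_19 {G H : Type*}
    [Group G] [TopologicalSpace G] [IsTopologicalGroup G] [PolishSpace G]
    [MeasurableSpace G] [BorelSpace G]
    [Group H] [TopologicalSpace H] [IsTopologicalGroup H] [PolishSpace H]
    [MeasurableSpace H] [BorelSpace H]
    (φ : G →* H) (hφcont : Continuous φ) (hφsurj : Function.Surjective φ)
    (hH : ∃ N M : Set H, IsHaarNull N ∧ IsMeagre M ∧ N ∪ M = Set.univ ∧ Disjoint N M) :
    ∃ N M : Set G, IsHaarNull N ∧ IsMeagre M ∧ N ∪ M = Set.univ ∧ Disjoint N M := by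
  obtain ⟨N, M, ⟨B, hNB, hBmeas, μ, hμprob, hμnull⟩, hM, hunion, hdisj⟩ := hH
  have hopen : IsOpenMap φ := my_isOpenMap φ hφcont hφsurj
  obtain ⟨s, hsmeas, hsφ⟩ := my_exists_section φ hφcont hφsurj hopen
  haveI := hμprob
  refine ⟨φ ⁻¹' N, φ ⁻¹' M, ?_, ?_, ?_, ?_⟩
  · refine ⟨φ ⁻¹' B, Set.preimage_mono hNB, hφcont.measurable hBmeas,
      μ.map s, Measure.isProbabilityMeasure_map hsmeas.aemeasurable, ?_⟩
    intro g h
    have himg : (fun b => g * b * h) '' (φ ⁻¹' B) =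
        (fun b => g⁻¹ * b * h⁻¹) ⁻¹' (φ ⁻¹' B) := by
      ext x
      simp only [Set.mem_image, Set.mem_preimage]
      constructor
      · rintro ⟨b, hb, rfl⟩
        have : g⁻¹ * (g * b * h) * h⁻¹ = b := by group
        rw [this]
        exact hb
      · intro hx
        exact ⟨g⁻¹ * x * h⁻¹, hx, by group⟩
    have hmeas2 : MeasurableSet ((fun b : G => g⁻¹ * b * h⁻¹) ⁻¹' (φ ⁻¹' B)) := by
      have hcont2 : Continuous fun b : G => g⁻¹ * b * h⁻¹ := by continuity
      exact hcont2.measurable (hφcont.measurable hBmeas)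
    rw [himg, MeasureTheory.Measure.map_apply hsmeas hmeas2]
    have hset : s ⁻¹' ((fun b : G => g⁻¹ * b * h⁻¹) ⁻¹' (φ ⁻¹' B)) =
        (fun b => φ g * b * φ h) '' B := by
      ext x
      simp only [Set.mem_preimage, Set.mem_image]
      constructor
      · intro hx
        refine ⟨(φ g)⁻¹ * x * (φ h)⁻¹, ?_, by group⟩
        have : φ (g⁻¹ * s x * h⁻¹) = (φ g)⁻¹ * x * (φ h)⁻¹ := by
          rw [map_mul, map_mul, map_inv, map_inv, hsφ]
        rw [← this]
        exact hx
      · rintro ⟨b, hb, rfl⟩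
        show φ (g⁻¹ * s (φ g * b * φ h) * h⁻¹) ∈ B
        rw [map_mul, map_mul, map_inv, map_inv, hsφ]
        have : (φ g)⁻¹ * (φ g * b * φ h) * (φ h)⁻¹ = b := by group
        rw [this]
        exact hb
    rw [hset]
    exact hμnull (φ g) (φ h)
  · exact hM.preimage_of_isOpenMap hφcont hopen
  · rw [← Set.preimage_union, hunion, Set.preimage_univ]
  · exact hdisj.preimage φ
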